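/- Let H and K be real inner product spaces and D : H → K a linear map. Let u_1, …, u_S be vectors in H, let C ∈ ℝ^{S×S} be the Gram matrix with entries C_{kl} = ⟨u_k, u_l⟩, let a_1, …, a_S ∈ ℝ^S be an orthonormal basis of eigenvectors of C with corresponding eigenvalues λ_1 ≥ … ≥ λ_S ≥ 0, and let r be the number of positive eigenvalues. For 1 ≤ i ≤ r define φ_i := λ_i^{−1/2} Σ_{k=1}^S (a_i)_k u_k, and for 1 ≤ R ≤ r define Π_R v := Σ_{i=1}^R ⟨v, φ_i⟩ φ_i. Then for every subset G ⊆ {1, …, S}, Σ_{k∈G} ‖D(u_k − Π_R u_k)‖² ≤ Σ_{i=R+1}^r λ_i ‖Dφ_i‖². -/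

import Mathlib

open RealInnerProductSpace Matrix

/-- The per-ensemble-member D-seminorm snapshot projection-error bound (second display of
Lemma 5.2): for the POD basis built from the eigenpairs of the snapshot Gram matrix, a
linear map `D : H → K`, any `1 ≤ R ≤ r`, and any subset `G` of the snapshot indices,
`Σ_{k ∈ G} ‖D(u_k − Π_R u_k)‖² ≤ Σ_{i=R+1}^r μ_i ‖Dφ_i‖²`,
where `Π_R v = Σ_{i=1}^R ⟨v, φ_i⟩ φ_i`. -/
theorem pod_gradient_projection_error_subset_bound
    {H K : Type*} [NormedAddCommGroup H] [InnerProductSpace ℝ H]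
    [NormedAddCommGroup K] [InnerProductSpace ℝ K]
    (D : H →ₗ[ℝ] K)
    {S : ℕ} (u : Fin S → H)
    (C : Matrix (Fin S) (Fin S) ℝ) (hC : ∀ k l, C k l = ⟪u k, u l⟫)
    (a : Fin S → (Fin S → ℝ)) (μ : Fin S → ℝ)
    (heig : ∀ i, C.mulVec (a i) = μ i • a i)
    (horth : ∀ i j, ∑ k, a i k * a j k = if i = j then (1 : ℝ) else 0)
    (hmono : ∀ i j : Fin S, i ≤ j → μ j ≤ μ i)
    (hnonneg : ∀ i, 0 ≤ μ i)
    (r : ℕ) (hr : ∀ i : Fin S, ((i : ℕ) < r ↔ 0 < μ i))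
    (φ : Fin S → H)
    (hφ : ∀ i : Fin S, (i : ℕ) < r →
      φ i = (Real.sqrt (μ i))⁻¹ • ∑ k, a i k • u k)
    (R : ℕ) (hR1 : 1 ≤ R) (hRr : R ≤ r)
    (P : H → H)
    (hP : ∀ v, P v = ∑ i ∈ Finset.univ.filter (fun i : Fin S => (i : ℕ) < R),
      ⟪v, φ i⟫ • φ i)
    (G : Finset (Fin S)) :
    ∑ k ∈ G, ‖D (u k - P (u k))‖ ^ 2 ≤
      ∑ i ∈ Finset.univ.filter (fun i : Fin S => R ≤ (i : ℕ) ∧ (i : ℕ) < r),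
        μ i * ‖D (φ i)‖ ^ 2 := by
  classical
  -- column orthonormality of the eigenvector matrix
  have hcol : ∀ m l : Fin S, ∑ i, a i m * a i l = if m = l then (1 : ℝ) else 0 := by
    intro m l
    have hA : (Matrix.of a) * (Matrix.of a)ᵀ = 1 := by
      ext i j
      simpa [Matrix.mul_apply, Matrix.one_apply] using horth i j
    have hA' : (Matrix.of a)ᵀ * (Matrix.of a) = 1 := mul_eq_one_comm.mp hA
    have h := congrFun (congrFun hA' m) l
    simpa [Matrix.mul_apply, Matrix.one_apply, Matrix.transpose_apply] using h
  -- symmetry of C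
  have hCsymm : ∀ k l, C k l = C l k := by
    intro k l; rw [hC, hC, real_inner_comm]
  -- pointwise eigen-equation
  have heig' : ∀ i k, (∑ l, C k l * a i l) = μ i * a i k := by
    intro i k
    have h := congrFun (heig i) k
    simpa [Matrix.mulVec, dotProduct] using h
  -- μ vanishes outside the positive range
  have hμ0 : ∀ i : Fin S, ¬ ((i : ℕ) < r) → μ i = 0 := by
    intro i hi
    have := (hr i).not
    have : ¬ (0 < μ i) := by tauto
    linarith [hnonneg i]
  -- positivity inside range
  have hμpos : ∀ i : Fin S, (i : ℕ) < r → 0 < μ i := fun i hi => (hr i).mp hi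
  have hsqrt : ∀ i : Fin S, (i : ℕ) < r →
      Real.sqrt (μ i) * Real.sqrt (μ i) = μ i := fun i hi =>
    Real.mul_self_sqrt (hnonneg i)
  have hsqrtpos : ∀ i : Fin S, (i : ℕ) < r → 0 < Real.sqrt (μ i) := fun i hi =>
    Real.sqrt_pos.mpr (hμpos i hi)
  -- spectral decomposition of C
  have hspec : ∀ k l, C k l = ∑ i, μ i * (a i k * a i l) := by
    intro k l
    have h1 : ∑ i, μ i * (a i k * a i l) = ∑ i, ∑ m, C k m * a i m * a i l := by
      refine Finset.sum_congr rfl fun i _ => ?_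
      rw [show μ i * (a i k * a i l) = (μ i * a i k) * a i l by ring, ← heig' i k,
        Finset.sum_mul]
    rw [h1, Finset.sum_comm]
    have h2 : ∀ m, (∑ i, C k m * a i m * a i l) = C k m * (if m = l then (1:ℝ) else 0) := by
      intro m
      rw [← hcol m l, Finset.mul_sum]
      exact Finset.sum_congr rfl fun i _ => by ring
    rw [Finset.sum_congr rfl fun m _ => h2 m]
    simp
  -- inner products of POD modes with snapshots
  have hφu : ∀ i : Fin S, (i : ℕ) < r → ∀ k, ⟪φ i, u k⟫ = Real.sqrt (μ i) * a i k := by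
    intro i hi k
    rw [hφ i hi, real_inner_smul_left, sum_inner]
    have h3 : (∑ l, ⟪a i l • u l, u k⟫) = ∑ l, C k l * a i l := by
      refine Finset.sum_congr rfl fun l _ => ?_
      rw [real_inner_smul_left, ← hC, hCsymm]; ring
    rw [h3, heig' i k, ← hsqrt i hi]
    have hne := (hsqrtpos i hi).ne'
    field_simp
    rw [Real.sq_sqrt (sq_nonneg (Real.sqrt (μ i)))]
  -- orthonormality of POD modes
  have hφφ : ∀ i j : Fin S, (i:ℕ) < r → (j:ℕ) < r →
      ⟪φ i, φ j⟫ = if i = j then (1:ℝ) else 0 := by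
    intro i j hi hj
    rw [hφ j hj, real_inner_smul_right, inner_sum]
    have h4 : (∑ k, ⟪φ i, a j k • u k⟫) = Real.sqrt (μ i) * ∑ k, a i k * a j k := by
      rw [Finset.mul_sum]
      refine Finset.sum_congr rfl fun k _ => ?_
      rw [real_inner_smul_right, hφu i hi k]; ring
    rw [h4, horth i j]
    by_cases h : i = j
    · subst h
      simp only [if_pos rfl, if_true, mul_one]
      exact inv_mul_cancel₀ (hsqrtpos i hi).ne'
    · simp only [if_neg h, mul_zero]
  set Fr := Finset.univ.filter (fun i : Fin S => (i:ℕ) < r) with hFr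
  set FR := Finset.univ.filter (fun i : Fin S => (i:ℕ) < R) with hFR
  set F := Finset.univ.filter (fun i : Fin S => R ≤ (i:ℕ) ∧ (i:ℕ) < r) with hF
  -- exact snapshot expansion
  have hu : ∀ k, u k = ∑ i ∈ Fr, (Real.sqrt (μ i) * a i k) • φ i := by
    intro k
    set s := ∑ i ∈ Fr, (Real.sqrt (μ i) * a i k) • φ i with hs
    have hsu : ⟪s, u k⟫ = ∑ i ∈ Fr, μ i * (a i k * a i k) := by
      rw [hs, sum_inner]
      refine Finset.sum_congr rfl fun i hi => ?_
      have hi' : (i:ℕ) < r := by simpa [hFr, Finset.mem_filter] using hi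
      rw [real_inner_smul_left, hφu i hi' k, mul_mul_mul_comm, hsqrt i hi']
    have hus : ⟪u k, s⟫ = ∑ i ∈ Fr, μ i * (a i k * a i k) := by
      rw [real_inner_comm]; exact hsu
    have hss : ⟪s, s⟫ = ∑ i ∈ Fr, μ i * (a i k * a i k) := by
      nth_rewrite 2 [hs]
      rw [inner_sum]
      refine Finset.sum_congr rfl fun j hj => ?_
      have hj' : (j:ℕ) < r := by simpa [hFr, Finset.mem_filter] using hj
      rw [real_inner_smul_right, hs, sum_inner]
      have h5 : ∀ i ∈ Fr, ⟪(Real.sqrt (μ i) * a i k) • φ i, φ j⟫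
          = (if i = j then Real.sqrt (μ i) * a i k else 0) := by
        intro i hi
        have hi' : (i:ℕ) < r := by simpa [hFr, Finset.mem_filter] using hi
        rw [real_inner_smul_left, hφφ i j hi' hj']
        by_cases h : i = j <;> simp [h]
      rw [Finset.sum_congr rfl h5, Finset.sum_ite_eq' Fr j
        (fun i => Real.sqrt (μ i) * a i k), if_pos hj, mul_mul_mul_comm, hsqrt j hj']
    have huu : ⟪u k, u k⟫ = ∑ i ∈ Fr, μ i * (a i k * a i k) := by
      rw [← hC, hspec k k]
      exact (Finset.sum_subset (Finset.subset_univ Fr) (fun x _ hx => by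
        have hx0 : μ x = 0 := hμ0 x (by simpa [hFr, Finset.mem_filter] using hx)
        simp [hx0])).symm
    have hz : ⟪u k - s, u k - s⟫ = (0:ℝ) := by
      rw [inner_sub_left, inner_sub_right, inner_sub_right, hsu, hus, hss, huu]; ring
    have h0 : u k - s = 0 := inner_self_eq_zero.mp hz
    exact (sub_eq_zero.mp h0)
  -- subsets
  have hFRsub : FR ⊆ Fr := by
    intro i hi
    simp only [hFR, hFr, Finset.mem_filter, Finset.mem_univ, true_and] at *
    omega
  have hFdiff : Fr \ FR = F := by
    ext i
    simp only [hFr, hFR, hF, Finset.mem_sdiff, Finset.mem_filter, Finset.mem_univ, true_and]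
    omega
  -- projection error expansion
  have hdiff : ∀ k, u k - P (u k) = ∑ i ∈ F, (Real.sqrt (μ i) * a i k) • φ i := by
    intro k
    have hPu : P (u k) = ∑ i ∈ FR, (Real.sqrt (μ i) * a i k) • φ i := by
      rw [hP]
      refine Finset.sum_congr rfl fun i hi => ?_
      have hi' : (i:ℕ) < r := lt_of_lt_of_le
        (by simpa [hFR, Finset.mem_filter] using hi) hRr
      rw [real_inner_comm, hφu i hi' k]
    rw [hPu, hu k, ← hFdiff, Finset.sum_sdiff_eq_sub hFRsub]
  -- full-sum identity
  have hfull : ∑ k : Fin S, ‖D (u k - P (u k))‖ ^ 2 = ∑ i ∈ F, μ i * ‖D (φ i)‖ ^ 2 := by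
    have hterm : ∀ k : Fin S, ‖D (u k - P (u k))‖ ^ 2
        = ∑ i ∈ F, ∑ j ∈ F, (Real.sqrt (μ i) * a i k) * (Real.sqrt (μ j) * a j k)
            * ⟪D (φ i), D (φ j)⟫ := by
      intro k
      rw [← real_inner_self_eq_norm_sq, hdiff k, map_sum, sum_inner]
      refine Finset.sum_congr rfl fun i hi => ?_
      rw [inner_sum]
      refine Finset.sum_congr rfl fun j hj => ?_
      rw [LinearMap.map_smul, LinearMap.map_smul, real_inner_smul_left, real_inner_smul_right]
      ring
    calc ∑ k : Fin S, ‖D (u k - P (u k))‖ ^ 2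
        = ∑ i ∈ F, ∑ k : Fin S, ∑ j ∈ F, (Real.sqrt (μ i) * a i k)
            * (Real.sqrt (μ j) * a j k) * ⟪D (φ i), D (φ j)⟫ := by
          rw [Finset.sum_congr rfl (fun k _ => hterm k), Finset.sum_comm]
      _ = ∑ i ∈ F, ∑ j ∈ F, ∑ k : Fin S, (Real.sqrt (μ i) * a i k)
            * (Real.sqrt (μ j) * a j k) * ⟪D (φ i), D (φ j)⟫ := by
          exact Finset.sum_congr rfl fun i _ => Finset.sum_comm
      _ = ∑ i ∈ F, ∑ j ∈ F, (if i = j then μ i * ⟪D (φ i), D (φ i)⟫ else 0) := by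
          refine Finset.sum_congr rfl fun i hi => Finset.sum_congr rfl fun j hj => ?_
          have hi' : (i:ℕ) < r := by
            have hm := Finset.mem_filter.mp hi
            exact hm.2.2
          have h6 : (∑ k : Fin S, (Real.sqrt (μ i) * a i k) * (Real.sqrt (μ j) * a j k)
              * ⟪D (φ i), D (φ j)⟫)
              = (Real.sqrt (μ i) * Real.sqrt (μ j) * ⟪D (φ i), D (φ j)⟫)
                * ∑ k, a i k * a j k := by
            rw [Finset.mul_sum]
            exact Finset.sum_congr rfl fun k _ => by ring
          rw [h6, horth i j]
          by_cases h : i = j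
          · subst h
            rw [if_pos rfl, if_pos rfl, mul_one, hsqrt i hi']
          · rw [if_neg h, if_neg h, mul_zero]
      _ = ∑ i ∈ F, μ i * ‖D (φ i)‖ ^ 2 := by
          refine Finset.sum_congr rfl fun i hi => ?_
          rw [Finset.sum_ite_eq F i (fun _ => μ i * ⟪D (φ i), D (φ i)⟫), if_pos hi,
            real_inner_self_eq_norm_sq]
  calc ∑ k ∈ G, ‖D (u k - P (u k))‖ ^ 2
      ≤ ∑ k : Fin S, ‖D (u k - P (u k))‖ ^ 2 :=
        Finset.sum_le_sum_of_subset_of_nonneg (Finset.subset_univ G)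
          (fun k _ _ => by positivity)
    _ = ∑ i ∈ F, μ i * ‖D (φ i)‖ ^ 2 := hfull
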